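/- Let k ≥ 1 and A ∈ ℝ^{n×m} with m ≥ 2k + 1, and let δ = min_{rank(B) ≤ k} |A − B|_∞ be the optimal rank-k approximation error of A in the entrywise ℓ_∞ norm. Then the number of 2k-element subsets R of the column indices [m] such that at least m/10 of the column indices i ∈ [m] satisfy min_{x ∈ ℝ^{2k}} |A_R x − A_i|_∞ ≤ (k+1) δ is at least (4/9) · C(m, 2k). -/

import Mathlib

open Matrix

/-- The `ℓ_∞` norm of a vector in `ℝ^n`. -/
noncomputable def vecSupNorm {n : ℕ} (v : Fin n → ℝ) : ℝ :=
  ⨆ j, |v j|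

/-- The entrywise `ℓ_∞` norm of a matrix `M ∈ ℝ^{n×m}`. -/
noncomputable def matSupNorm {n m : ℕ} (M : Matrix (Fin n) (Fin m) ℝ) : ℝ :=
  ⨆ i, ⨆ j, |M i j|

open scoped Classical

noncomputable def cst {n m : ℕ} (A : Matrix (Fin n) (Fin m) ℝ) (R : Finset (Fin m)) (i : Fin m) : ℝ :=
  sInf {c : ℝ | ∃ x : Fin m → ℝ, c = vecSupNorm (fun r => (∑ j ∈ R, x j * A r j) - A r i)}

lemma vecSupNorm_nonneg {n : ℕ} (v : Fin n → ℝ) : 0 ≤ vecSupNorm v :=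
  Real.iSup_nonneg fun _ => abs_nonneg _

lemma vecSupNorm_le {n : ℕ} {v : Fin n → ℝ} {a : ℝ} (ha : 0 ≤ a) (h : ∀ j, |v j| ≤ a) :
    vecSupNorm v ≤ a := Real.iSup_le h ha

lemma matSupNorm_nonneg {n m : ℕ} (M : Matrix (Fin n) (Fin m) ℝ) : 0 ≤ matSupNorm M :=
  Real.iSup_nonneg fun _ => Real.iSup_nonneg fun _ => abs_nonneg _

lemma abs_le_matSupNorm {n m : ℕ} (M : Matrix (Fin n) (Fin m) ℝ) (i : Fin n) (j : Fin m) :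
    |M i j| ≤ matSupNorm M := by
  have h1 : |M i j| ≤ ⨆ j', |M i j'| :=
    le_ciSup (f := fun j' => |M i j'|) (Set.Finite.bddAbove (Set.finite_range _)) j
  exact h1.trans (le_ciSup (f := fun i' => ⨆ j', |M i' j'|)
    (Set.Finite.bddAbove (Set.finite_range _)) i)

lemma cst_le {n m : ℕ} (A : Matrix (Fin n) (Fin m) ℝ) (R : Finset (Fin m)) (i : Fin m)
    {t : ℝ} (ht : 0 ≤ t) (x : Fin m → ℝ)
    (h : ∀ r, |(∑ j ∈ R, x j * A r j) - A r i| ≤ t) : cst A R i ≤ t := by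
  have hb : BddBelow {c : ℝ | ∃ x : Fin m → ℝ,
      c = vecSupNorm (fun r => (∑ j ∈ R, x j * A r j) - A r i)} := by
    refine ⟨0, fun c hc => ?_⟩
    obtain ⟨y, rfl⟩ := hc
    exact vecSupNorm_nonneg _
  exact le_trans (csInf_le hb ⟨x, rfl⟩) (vecSupNorm_le ht h)

lemma cst_self {n m : ℕ} (A : Matrix (Fin n) (Fin m) ℝ) {R : Finset (Fin m)} {i : Fin m}
    (hi : i ∈ R) {t : ℝ} (ht : 0 ≤ t) : cst A R i ≤ t := by
  refine cst_le A R i ht (Pi.single i 1) fun r => ?_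
  have hs : ∑ j ∈ R, (Pi.single i 1 : Fin m → ℝ) j * A r j = A r i := by
    rw [Finset.sum_eq_single i]
    · simp
    · intro b _ hb; simp [Pi.single_eq_of_ne hb]
    · intro h; exact absurd hi h
  simp [hs, ht]

lemma exists_dep {n m k : ℕ} {B : Matrix (Fin n) (Fin m) ℝ} (hB : B.rank ≤ k)
    {T : Finset (Fin m)} (hT : T.card = k + 1) :
    ∃ i ∈ T, ∃ x : Fin m → ℝ, (∀ j, |x j| ≤ 1) ∧ (∀ j, j ∉ T.erase i → x j = 0) ∧
      ∀ r, B r i = ∑ j ∈ T.erase i, x j * B r j := by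
  set W := LinearMap.range B.mulVecLin with hW
  have hcol : ∀ j : Fin m, (fun r => B r j) ∈ W := by
    intro j
    exact ⟨Pi.single j 1, by ext r; simp [Matrix.mulVecLin_apply, Matrix.mulVec_single]⟩
  have hnli : ¬ LinearIndependent ℝ
      (fun j : {a // a ∈ T} => (⟨fun r => B r (j : Fin m), hcol j⟩ : W)) := by
    intro h
    have hc := h.fintype_card_le_finrank
    rw [Fintype.card_coe, hT] at hc
    have hfr : Module.finrank ℝ W = B.rank := rfl
    rw [hfr] at hc
    omega
  obtain ⟨g, hg0, j1, hj1⟩ := Fintype.not_linearIndependent_iff.mp hnli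
  set g' : Fin m → ℝ := fun j => if h : j ∈ T then g ⟨j, h⟩ else 0 with hg'
  have hgT : ∀ j : {a // a ∈ T}, g' (j : Fin m) = g j := by
    intro j; simp [hg', j.2]
  have hgsum : ∀ r, ∑ j ∈ T, g' j * B r j = 0 := by
    intro r
    have h2 : ∑ j : {a // a ∈ T}, g j * B r (j : Fin m) = 0 := by
      have h1 := congrArg (fun (w : W) => (w : Fin n → ℝ) r) hg0
      simpa [Submodule.coe_sum, Finset.sum_apply] using h1
    rw [← Finset.sum_coe_sort T (fun j => g' j * B r j)]
    rw [Finset.sum_congr rfl fun j _ => by rw [hgT j]]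
    exact h2
  have hTne : T.Nonempty := Finset.card_pos.mp (by omega)
  obtain ⟨i0, hi0T, hmax⟩ := Finset.exists_max_image T (fun j => |g' j|) hTne
  have hgi0 : g' i0 ≠ 0 := by
    intro h0
    have h1 : g' (j1 : Fin m) = g j1 := hgT j1
    have h2 : 0 < |g' (j1 : Fin m)| := by rw [h1]; exact abs_pos.mpr hj1
    have h3 := hmax (j1 : Fin m) j1.2
    rw [h0, abs_zero] at h3
    linarith
  refine ⟨i0, hi0T, fun j => if j ∈ T.erase i0 then -(g' j) / g' i0 else 0, ?_, ?_, ?_⟩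
  · intro j
    by_cases hj : j ∈ T.erase i0
    · simp only [if_pos hj]
      rw [abs_div, abs_neg]
      exact div_le_one_of_le₀ (hmax j (Finset.mem_of_mem_erase hj)) (abs_nonneg _)
    · simp [hj]
  · intro j hj; simp [hj]
  · intro r
    have hs := hgsum r
    rw [← Finset.add_sum_erase T _ hi0T] at hs
    have h4 : ∑ j ∈ T.erase i0, g' j * B r j = -(g' i0 * B r i0) := by linarith
    have h3 : ∀ j ∈ T.erase i0,
        (if j ∈ T.erase i0 then -(g' j) / g' i0 else 0) * B r j
          = (g' j * B r j) * (-(1 / g' i0)) := by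
      intro j hj; rw [if_pos hj]; ring
    rw [Finset.sum_congr rfl h3, ← Finset.sum_mul, h4]
    field_simp

lemma cover {n m k : ℕ} (A B : Matrix (Fin n) (Fin m) ℝ) (hB : B.rank ≤ k)
    {S : Finset (Fin m)} (hS : S.card = 2 * k + 1) :
    k + 1 ≤ (S.filter (fun i =>
      cst A (S.erase i) i ≤ ((k : ℝ) + 1) * matSupNorm (A - B))).card := by
  set η := matSupNorm (A - B) with hηdef
  have hη0 : 0 ≤ η := matSupNorm_nonneg _
  set t : ℝ := ((k : ℝ) + 1) * η with hts
  have ht0 : 0 ≤ t := by positivity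
  have hU : (S.filter (fun i => ¬ cst A (S.erase i) i ≤ t)).card ≤ k := by
    by_contra hcon
    push_neg at hcon
    obtain ⟨T, hTsub, hTcard⟩ := Finset.exists_subset_card_eq hcon
    obtain ⟨i, hiT, x, hx1, hx0, hdep⟩ := exists_dep hB hTcard
    have hTS : T ⊆ S := hTsub.trans (Finset.filter_subset _ _)
    have hcost : cst A (S.erase i) i ≤ t := by
      refine cst_le A _ i ht0 x fun r => ?_
      have hsub : T.erase i ⊆ S.erase i := Finset.erase_subset_erase _ hTS
      have hsum : ∑ j ∈ S.erase i, x j * A r j = ∑ j ∈ T.erase i, x j * A r j :=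
        (Finset.sum_subset hsub (fun j _ hj => by rw [hx0 j hj, zero_mul])).symm
      rw [hsum]
      have hkey : (∑ j ∈ T.erase i, x j * A r j) - A r i
          = (∑ j ∈ T.erase i, x j * (A - B) r j) - (A - B) r i := by
        have h1 : ∑ j ∈ T.erase i, x j * (A - B) r j
            = (∑ j ∈ T.erase i, x j * A r j) - ∑ j ∈ T.erase i, x j * B r j := by
          rw [← Finset.sum_sub_distrib]
          exact Finset.sum_congr rfl fun j _ => by
            simp only [Matrix.sub_apply]; ring
        rw [h1, Matrix.sub_apply, ← hdep r]; ring
      rw [hkey]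
      have hcard : (T.erase i).card = k := by
        rw [Finset.card_erase_of_mem hiT, hTcard]
        omega
      calc |(∑ j ∈ T.erase i, x j * (A - B) r j) - (A - B) r i|
          ≤ |∑ j ∈ T.erase i, x j * (A - B) r j| + |(A - B) r i| := abs_sub _ _
        _ ≤ (∑ j ∈ T.erase i, |x j * (A - B) r j|) + η :=
            add_le_add (Finset.abs_sum_le_sum_abs _ _) (abs_le_matSupNorm _ _ _)
        _ ≤ (∑ _j ∈ T.erase i, 1 * η) + η := by
            refine add_le_add_left (Finset.sum_le_sum fun j _ => ?_) η
            rw [abs_mul]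
            exact mul_le_mul (hx1 j) (abs_le_matSupNorm _ _ _) (abs_nonneg _) zero_le_one
        _ = t := by
            rw [Finset.sum_const, hcard, nsmul_eq_mul, hts]
            push_cast; ring
    exact absurd hcost (not_le.mpr (Finset.mem_filter.mp (hTsub hiT)).2)
  have hsplit := Finset.card_filter_add_card_filter_not
    (s := S) (p := fun i => cst A (S.erase i) i ≤ t)
  omega

lemma keyS {n m k : ℕ} (A : Matrix (Fin n) (Fin m) ℝ) (δ : ℝ)
    (hδ : δ = sInf {c : ℝ | ∃ B : Matrix (Fin n) (Fin m) ℝ, B.rank ≤ k ∧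
      c = matSupNorm (A - B)})
    {S : Finset (Fin m)} (hS : S.card = 2 * k + 1) :
    k + 1 ≤ (S.filter (fun i => cst A (S.erase i) i ≤ ((k : ℝ) + 1) * δ)).card := by
  set t0 : ℝ := ((k : ℝ) + 1) * δ with ht0def
  by_cases hS' : (S.filter (fun i => t0 < cst A (S.erase i) i)).Nonempty
  · obtain ⟨imin, him, hmin⟩ := Finset.exists_min_image _ (fun i => cst A (S.erase i) i) hS'
    set cs : ℝ := cst A (S.erase imin) imin with hcsdef
    have hcs : t0 < cs := (Finset.mem_filter.mp him).2
    set ε : ℝ := (cs - t0) / ((k : ℝ) + 1) with hεdef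
    have hk1 : (0:ℝ) < (k : ℝ) + 1 := by positivity
    have hε : 0 < ε := div_pos (by linarith) hk1
    have hne : {c : ℝ | ∃ B : Matrix (Fin n) (Fin m) ℝ, B.rank ≤ k ∧
        c = matSupNorm (A - B)}.Nonempty :=
      ⟨matSupNorm (A - 0), 0, by simp [Matrix.rank_zero], rfl⟩
    obtain ⟨d, hdmem, hdlt⟩ := Real.lt_sInf_add_pos hne hε
    obtain ⟨B0, hB0rank, rfl⟩ := hdmem
    have hdd : matSupNorm (A - B0) < δ + ε := by rw [hδ]; exact hdlt
    have hd2 : ((k : ℝ) + 1) * matSupNorm (A - B0) < cs := by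
      calc ((k : ℝ) + 1) * matSupNorm (A - B0)
          < ((k : ℝ) + 1) * (δ + ε) := by
            exact mul_lt_mul_of_pos_left hdd hk1
        _ = cs := by
            rw [hεdef, ht0def]; field_simp; ring
    have hcov := cover A B0 hB0rank hS
    refine le_trans hcov (Finset.card_le_card ?_)
    intro i hi
    rw [Finset.mem_filter] at hi ⊢
    refine ⟨hi.1, ?_⟩
    by_contra hcon
    push_neg at hcon
    have hmem : i ∈ S.filter (fun i => t0 < cst A (S.erase i) i) :=
      Finset.mem_filter.mpr ⟨hi.1, hcon⟩
    have := hmin i hmem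
    linarith [hi.2]
  · have hall : S.filter (fun i => cst A (S.erase i) i ≤ t0) = S := by
      apply Finset.filter_eq_self.mpr
      intro i hiS
      by_contra h
      exact hS' ⟨i, Finset.mem_filter.mpr ⟨hiS, lt_of_not_ge h⟩⟩
    rw [hall, hS]
    omega

theorem main_aux {n m k : ℕ} (hk : 1 ≤ k) (hm : 2 * k + 1 ≤ m)
    (A : Matrix (Fin n) (Fin m) ℝ) (δ : ℝ)
    (hδ : δ = sInf {c : ℝ | ∃ B : Matrix (Fin n) (Fin m) ℝ, B.rank ≤ k ∧
      c = matSupNorm (A - B)}) :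
    (4 / 9 : ℝ) * (Nat.choose m (2 * k) : ℝ) ≤
      (((Finset.powersetCard (2 * k) (Finset.univ : Finset (Fin m))).filter
        (fun R => (m : ℝ) / 10 ≤
          (((Finset.univ : Finset (Fin m)).filter (fun i =>
            cst A R i ≤ ((k : ℝ) + 1) * δ)).card : ℝ))).card : ℝ) := by
  have hδ0 : 0 ≤ δ := by
    rw [hδ]
    refine Real.sInf_nonneg fun c hc => ?_
    obtain ⟨B, _, rfl⟩ := hc
    exact matSupNorm_nonneg _
  set t0 : ℝ := ((k : ℝ) + 1) * δ with ht0def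
  have ht00 : 0 ≤ t0 := by positivity
  set P := Finset.powersetCard (2 * k) (Finset.univ : Finset (Fin m)) with hP
  set Q := Finset.powersetCard (2 * k + 1) (Finset.univ : Finset (Fin m)) with hQ
  -- Step A: each S in Q has at least k+1 good erase-points
  have stepA : ∀ S ∈ Q, k + 1 ≤ (S.filter (fun i => cst A (S.erase i) i ≤ t0)).card := by
    intro S hS
    exact keyS A δ hδ (Finset.mem_powersetCard_univ.mp hS)
  -- Step B: double counting
  have stepB : ∑ S ∈ Q, (S.filter (fun i => cst A (S.erase i) i ≤ t0)).card
      = ∑ R ∈ P, (Finset.univ.filter (fun i => i ∉ R ∧ cst A R i ≤ t0)).card := by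
    rw [← Finset.card_sigma, ← Finset.card_sigma]
    refine Finset.card_bij'
      (fun p _ => (⟨p.1.erase p.2, p.2⟩ : (_ : Finset (Fin m)) × Fin m))
      (fun p _ => (⟨insert p.2 p.1, p.2⟩ : (_ : Finset (Fin m)) × Fin m))
      ?_ ?_ ?_ ?_
    · rintro ⟨S, i⟩ hp
      rw [Finset.mem_sigma] at hp
      obtain ⟨hp1, hp2⟩ := hp
      rw [Finset.mem_filter] at hp2
      rw [Finset.mem_sigma]
      constructor
      · rw [Finset.mem_powersetCard_univ]
        rw [Finset.card_erase_of_mem hp2.1, Finset.mem_powersetCard_univ.mp hp1]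
        omega
      · rw [Finset.mem_filter]
        exact ⟨Finset.mem_univ _, Finset.notMem_erase _ _, hp2.2⟩
    · rintro ⟨R, i⟩ hp
      rw [Finset.mem_sigma] at hp
      obtain ⟨hp1, hp2⟩ := hp
      rw [Finset.mem_filter] at hp2
      rw [Finset.mem_sigma]
      constructor
      · rw [Finset.mem_powersetCard_univ,
          Finset.card_insert_of_notMem hp2.2.1, Finset.mem_powersetCard_univ.mp hp1]
      · rw [Finset.mem_filter]
        refine ⟨Finset.mem_insert_self _ _, ?_⟩
        rw [Finset.erase_insert hp2.2.1]
        exact hp2.2.2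
    · rintro ⟨S, i⟩ hp
      rw [Finset.mem_sigma] at hp
      have hiS : i ∈ S := (Finset.mem_filter.mp hp.2).1
      simp [Finset.insert_erase hiS]
    · rintro ⟨R, i⟩ hp
      rw [Finset.mem_sigma] at hp
      have hiR : i ∉ R := (Finset.mem_filter.mp hp.2).2.1
      simp [Finset.erase_insert hiR]
  -- lower bound on the double count
  have h1 : Q.card * (k + 1) ≤ ∑ R ∈ P, (Finset.univ.filter
      (fun i => i ∉ R ∧ cst A R i ≤ t0)).card := by
    rw [← stepB]
    have h1' := Finset.card_nsmul_le_sum Q _ (k + 1) stepA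
    rw [smul_eq_mul] at h1'
    exact h1' 
  -- Step C: relate "outside" count to full count
  have stepC : ∀ R ∈ P, (Finset.univ.filter (fun i => i ∉ R ∧ cst A R i ≤ t0)).card + 2 * k
      ≤ (Finset.univ.filter (fun i => cst A R i ≤ t0)).card := by
    intro R hR
    have hdis : Disjoint (Finset.univ.filter (fun i => i ∉ R ∧ cst A R i ≤ t0)) R := by
      rw [Finset.disjoint_left]
      intro i hi
      exact (Finset.mem_filter.mp hi).2.1
    have hsub : (Finset.univ.filter (fun i => i ∉ R ∧ cst A R i ≤ t0)) ∪ R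
        ⊆ Finset.univ.filter (fun i => cst A R i ≤ t0) := by
      intro i hi
      rw [Finset.mem_union] at hi
      rw [Finset.mem_filter]
      rcases hi with hi | hi
      · exact ⟨Finset.mem_univ _, (Finset.mem_filter.mp hi).2.2⟩
      · exact ⟨Finset.mem_univ _, cst_self A hi ht00⟩
    have := Finset.card_le_card hsub
    rw [Finset.card_union_of_disjoint hdis, Finset.mem_powersetCard_univ.mp hR] at this
    exact this
  -- counting bounds
  have hgle : ∀ R ∈ P, (Finset.univ.filter (fun i => i ∉ R ∧ cst A R i ≤ t0)).card ≤ m - 2 * k := by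
    intro R hR
    have hsub : (Finset.univ.filter (fun i => i ∉ R ∧ cst A R i ≤ t0)) ⊆ Finset.univ \ R := by
      intro i hi
      rw [Finset.mem_sdiff]
      exact ⟨Finset.mem_univ _, (Finset.mem_filter.mp hi).2.1⟩
    have := Finset.card_le_card hsub
    rw [Finset.card_sdiff_of_subset (Finset.subset_univ R), Finset.card_univ, Fintype.card_fin,
      Finset.mem_powersetCard_univ.mp hR] at this
    exact this
  have hhle : ∀ R : Finset (Fin m), (Finset.univ.filter (fun i => cst A R i ≤ t0)).card ≤ m := by
    intro R
    calc (Finset.univ.filter (fun i => cst A R i ≤ t0)).card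
        ≤ (Finset.univ : Finset (Fin m)).card := Finset.card_filter_le _ _
      _ = m := by rw [Finset.card_univ, Fintype.card_fin]
  -- now do the real arithmetic
  set pred : Finset (Fin m) → Prop := fun R => (m : ℝ) / 10 ≤
    ((Finset.univ.filter (fun i => cst A R i ≤ t0)).card : ℝ) with hpred
  set G := P.filter pred with hG
  set d : ℝ := (m : ℝ) - 2 * (k : ℝ) with hd
  have hd1 : (1 : ℝ) ≤ d := by
    rw [hd]
    have : (2 * k + 1 : ℝ) ≤ (m : ℝ) := by exact_mod_cast hm
    linarith
  have hd0 : (0 : ℝ) < d := by linarith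
  have hNQid : (Q.card : ℝ) * (2 * (k : ℝ) + 1) = (P.card : ℝ) * d := by
    have hid := Nat.choose_succ_right_eq m (2 * k)
    have hQc : Q.card = m.choose (2 * k + 1) := by
      rw [hQ, Finset.card_powersetCard, Finset.card_univ, Fintype.card_fin]
    have hPc : P.card = m.choose (2 * k) := by
      rw [hP, Finset.card_powersetCard, Finset.card_univ, Fintype.card_fin]
    rw [hQc, hPc, hd]
    have h2k : 2 * k ≤ m := by omega
    have := congrArg (fun x : ℕ => (x : ℝ)) hid
    push_cast [Nat.cast_sub h2k] at this
    push_cast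
    linarith
  -- sum over P of the outside counts, real version
  have hsum_lower : ((k : ℝ) + 1) * (Q.card : ℝ)
      ≤ ∑ R ∈ P, ((Finset.univ.filter (fun i => i ∉ R ∧ cst A R i ≤ t0)).card : ℝ) := by
    have := h1
    have hcast : ((Q.card * (k + 1) : ℕ) : ℝ)
        ≤ ((∑ R ∈ P, (Finset.univ.filter (fun i => i ∉ R ∧ cst A R i ≤ t0)).card : ℕ) : ℝ) := by
      exact_mod_cast this
    push_cast at hcast
    linarith
  have hsum_upper : ∑ R ∈ P, ((Finset.univ.filter (fun i => i ∉ R ∧ cst A R i ≤ t0)).card : ℝ)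
      ≤ (G.card : ℝ) * d + ((P.card : ℝ) - (G.card : ℝ)) * (d / 10) := by
    rw [← Finset.sum_filter_add_sum_filter_not P pred
      (fun R => ((Finset.univ.filter (fun i => i ∉ R ∧ cst A R i ≤ t0)).card : ℝ))]
    have hb1 : ∑ R ∈ P.filter pred,
        ((Finset.univ.filter (fun i => i ∉ R ∧ cst A R i ≤ t0)).card : ℝ)
        ≤ (G.card : ℝ) * d := by
      have := Finset.sum_le_card_nsmul (P.filter pred)
        (fun R => ((Finset.univ.filter (fun i => i ∉ R ∧ cst A R i ≤ t0)).card : ℝ)) d ?_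
      · rw [nsmul_eq_mul] at this
        exact le_trans this (le_of_eq rfl)
      · intro R hR
        have hRP : R ∈ P := Finset.mem_of_mem_filter _ hR
        have := hgle R hRP
        have h2k : 2 * k ≤ m := by omega
        rw [hd]
        calc ((Finset.univ.filter (fun i => i ∉ R ∧ cst A R i ≤ t0)).card : ℝ)
            ≤ ((m - 2 * k : ℕ) : ℝ) := by exact_mod_cast this
          _ = (m : ℝ) - 2 * (k : ℝ) := by push_cast [Nat.cast_sub h2k]; ring
    have hb2 : ∑ R ∈ P.filter (fun R => ¬ pred R),
        ((Finset.univ.filter (fun i => i ∉ R ∧ cst A R i ≤ t0)).card : ℝ)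
        ≤ ((P.card : ℝ) - (G.card : ℝ)) * (d / 10) := by
      have hnat := Finset.card_filter_add_card_filter_not (s := P) (p := pred)
      have hcard : ((P.filter (fun R => ¬ pred R)).card : ℝ) = (P.card : ℝ) - (G.card : ℝ) := by
        rw [hG]
        push_cast
        have : ((P.filter pred).card : ℝ) + ((P.filter (fun R => ¬ pred R)).card : ℝ)
            = (P.card : ℝ) := by exact_mod_cast hnat
        linarith
      have := Finset.sum_le_card_nsmul (P.filter (fun R => ¬ pred R))
        (fun R => ((Finset.univ.filter (fun i => i ∉ R ∧ cst A R i ≤ t0)).card : ℝ)) (d / 10) ?_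
      · rw [nsmul_eq_mul, hcard] at this
        exact this
      · intro R hR
        rw [Finset.mem_filter] at hR
        obtain ⟨hRP, hRnp⟩ := hR
        have hhlt : ((Finset.univ.filter (fun i => cst A R i ≤ t0)).card : ℝ) < (m : ℝ) / 10 := by
          exact lt_of_not_ge hRnp
        have hgc := stepC R hRP
        have hgc' : ((Finset.univ.filter (fun i => i ∉ R ∧ cst A R i ≤ t0)).card : ℝ) + 2 * (k : ℝ)
            ≤ ((Finset.univ.filter (fun i => cst A R i ≤ t0)).card : ℝ) := by
          exact_mod_cast hgc
        have hk0 : (0 : ℝ) ≤ (k : ℝ) := Nat.cast_nonneg _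
        rw [hd]
        linarith
    linarith
  -- combine everything
  have hPc : P.card = m.choose (2 * k) := by
    rw [hP, Finset.card_powersetCard, Finset.card_univ, Fintype.card_fin]
  have hQ0 : (0 : ℝ) ≤ (Q.card : ℝ) := Nat.cast_nonneg _
  have hlow2 : (P.card : ℝ) * d / 2 ≤ ((k : ℝ) + 1) * (Q.card : ℝ) := by
    nlinarith [hNQid, hQ0]
  have hmain : (P.card : ℝ) * d / 2 ≤ (G.card : ℝ) * d + ((P.card : ℝ) - (G.card : ℝ)) * (d / 10) :=
    le_trans hlow2 (le_trans hsum_lower hsum_upper)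
  have hgoal : (4 / 9 : ℝ) * (P.card : ℝ) ≤ (G.card : ℝ) := by
    nlinarith [hmain, hd0, hd1]
  calc (4 / 9 : ℝ) * (Nat.choose m (2 * k) : ℝ) = (4 / 9 : ℝ) * (P.card : ℝ) := by rw [hPc]
    _ ≤ (G.card : ℝ) := hgoal

open scoped Classical in
/-- Let `k ≥ 1`, `A ∈ ℝ^{n×m}` with `m ≥ 2k+1`, and let `δ` be the optimal
rank-`k` approximation error of `A` in the entrywise `ℓ_∞` norm. Then the number of
`2k`-element subsets `R` of the column indices with at least `m/10` indices `i` satisfying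
`min_x |A_R x - A_i|_∞ ≤ (k+1)δ` is at least `(4/9)·C(m, 2k)`. -/
theorem random_column_subsets_cover_linf
    {n m k : ℕ} (hk : 1 ≤ k) (hm : 2 * k + 1 ≤ m)
    (A : Matrix (Fin n) (Fin m) ℝ) (δ : ℝ)
    (hδ : δ = sInf {c : ℝ | ∃ B : Matrix (Fin n) (Fin m) ℝ, B.rank ≤ k ∧
      c = matSupNorm (A - B)}) :
    (4 / 9 : ℝ) * (Nat.choose m (2 * k) : ℝ) ≤
      (((Finset.powersetCard (2 * k) (Finset.univ : Finset (Fin m))).filter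
        (fun R => (m : ℝ) / 10 ≤
          (((Finset.univ : Finset (Fin m)).filter (fun i =>
            sInf {c : ℝ | ∃ x : Fin m → ℝ,
                c = vecSupNorm (fun r => (∑ j ∈ R, x j * A r j) - A r i)}
              ≤ ((k : ℝ) + 1) * δ)).card : ℝ))).card : ℝ) := by
  exact main_aux hk hm A δ hδ
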